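/- arXiv:1402.0253 — 4 statements merged into one kernel-verified Lean document; each statement's English description precedes it below -/
import Mathlib

section
/- Let C be a symmetric monoidal category equipped, for every object A, with morphisms η_A : 𝟙 ⟶ A and μ_A : A ⊗ A ⟶ A such that: (i) naturality: for every morphism f : A ⟶ B one has η_A ≫ f = η_B and (f ⊗ f) ≫ μ_B = μ_A ≫ f; (ii) unit laws: (η_A ⊗ id_A) ≫ μ_A = λ_A and (id_A ⊗ η_A) ≫ μ_A = ρ_A; (iii) compatibility with the tensor product: for all A, B, μ_{A⊗B} = tensorμ(A,B,A,B) ≫ (μ_A ⊗ μ_B) and η_{A⊗B} = λ_𝟙⁻¹ ≫ (η_A ⊗ η_B), and moreover η_𝟙 = id_𝟙 and μ_𝟙 = λ_𝟙. Then the unit object 𝟙 is an initial object of C, and for all objects A, B the morphisms ρ_A⁻¹ ≫ (id_A ⊗ η_B) : A ⟶ A ⊗ B and λ_B⁻¹ ≫ (η_A ⊗ id_B) : B ⟶ A ⊗ B exhibit A ⊗ B as a binary coproduct of A and B; in particular C is cocartesian monoidal. -/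
open CategoryTheory MonoidalCategory Limits

universe v u

lemma tensorμ_unit_mid {C : Type u} [Category.{v} C] [MonoidalCategory C]
    [SymmetricCategory C] (A B : C) :
    tensorμ A (𝟙_ C) (𝟙_ C) B ≫ ((ρ_ A).hom ⊗ₘ (λ_ B).hom) = (ρ_ A).hom ⊗ₘ (λ_ B).hom := by
  dsimp only [tensorμ]
  rw [braiding_tensorUnit_left]
  monoidal

/-- A symmetric monoidal category with a natural commutative-monoid structure on every
object, compatible with the tensor product, is cocartesian monoidal: the unit is initial
and the tensor product is a binary coproduct, via the indicated coprojections. -/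
theorem unit_isInitial_and_tensor_isBinaryCoproduct_of_central_monoid
    {C : Type u} [Category.{v} C] [MonoidalCategory C] [SymmetricCategory C]
    (η : ∀ A : C, 𝟙_ C ⟶ A) (μ : ∀ A : C, A ⊗ A ⟶ A)
    (η_natural : ∀ {A B : C} (f : A ⟶ B), η A ≫ f = η B)
    (μ_natural : ∀ {A B : C} (f : A ⟶ B), (f ⊗ₘ f) ≫ μ B = μ A ≫ f)
    (unit_left : ∀ A : C, (η A ⊗ₘ 𝟙 A) ≫ μ A = (λ_ A).hom)
    (unit_right : ∀ A : C, (𝟙 A ⊗ₘ η A) ≫ μ A = (ρ_ A).hom)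
    (μ_tensor : ∀ A B : C, μ (A ⊗ B) = tensorμ A B A B ≫ (μ A ⊗ₘ μ B))
    (η_tensor : ∀ A B : C, η (A ⊗ B) = (λ_ (𝟙_ C)).inv ≫ (η A ⊗ₘ η B))
    (η_unit : η (𝟙_ C) = 𝟙 (𝟙_ C))
    (μ_unit : μ (𝟙_ C) = (λ_ (𝟙_ C)).hom) :
    Nonempty (IsInitial (𝟙_ C)) ∧
      ∀ A B : C, Nonempty (IsColimit (BinaryCofan.mk
        ((ρ_ A).inv ≫ (𝟙 A ⊗ₘ η B)) ((λ_ B).inv ≫ (η A ⊗ₘ 𝟙 B)))) := by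
  constructor
  · exact ⟨IsInitial.ofUniqueHom (fun A => η A) fun A m => by
      simpa [η_unit] using η_natural m⟩
  · intro A B
    refine ⟨BinaryCofan.isColimitMk (fun s => (s.inl ⊗ₘ s.inr) ≫ μ s.pt) ?_ ?_ ?_⟩
    · intro s
      show ((ρ_ A).inv ≫ (𝟙 A ⊗ₘ η B)) ≫ (s.inl ⊗ₘ s.inr) ≫ μ s.pt = s.inl
      rw [Category.assoc]; erw [tensorHom_comp_tensorHom_assoc, Category.id_comp, η_natural]
      dsimp only [Functor.const_obj_obj]
      erw [show s.inl ⊗ₘ η s.pt = (s.inl ⊗ₘ 𝟙 (𝟙_ C)) ≫ (𝟙 s.pt ⊗ₘ η s.pt) by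
          rw [tensorHom_comp_tensorHom]; erw [Category.comp_id]; simp,
        Category.assoc, unit_right, tensorHom_id, rightUnitor_naturality]
      erw [Iso.inv_hom_id_assoc]
    · intro s
      show ((λ_ B).inv ≫ (η A ⊗ₘ 𝟙 B)) ≫ (s.inl ⊗ₘ s.inr) ≫ μ s.pt = s.inr
      rw [Category.assoc]; erw [tensorHom_comp_tensorHom_assoc, Category.id_comp, η_natural]
      dsimp only [Functor.const_obj_obj]
      erw [show η s.pt ⊗ₘ s.inr = (𝟙 (𝟙_ C) ⊗ₘ s.inr) ≫ (η s.pt ⊗ₘ 𝟙 s.pt) by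
          rw [tensorHom_comp_tensorHom]; erw [Category.comp_id]; simp,
        Category.assoc, unit_left, id_tensorHom, leftUnitor_naturality]
      erw [Iso.inv_hom_id_assoc]
    · intro s m h₁ h₂
      have key : ((((ρ_ A).inv ≫ (𝟙 A ⊗ₘ η B)) ⊗ₘ ((λ_ B).inv ≫ (η A ⊗ₘ 𝟙 B))) ≫
          μ (A ⊗ B)) = 𝟙 (A ⊗ B) := by
        rw [μ_tensor, ← tensorHom_comp_tensorHom, Category.assoc, tensorμ_natural_assoc,
          tensorHom_comp_tensorHom, unit_right, unit_left, tensorμ_unit_mid,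
          tensorHom_comp_tensorHom, Iso.inv_hom_id, Iso.inv_hom_id, id_tensorHom_id]
      calc m = ((((ρ_ A).inv ≫ (𝟙 A ⊗ₘ η B)) ⊗ₘ ((λ_ B).inv ≫ (η A ⊗ₘ 𝟙 B))) ≫
            μ (A ⊗ B)) ≫ m := by rw [key, Category.id_comp]
        _ = ((s.inl ⊗ₘ s.inr) ≫ μ s.pt : A ⊗ B ⟶ s.pt) := by
            rw [Category.assoc, ← μ_natural m, tensorHom_comp_tensorHom_assoc, h₁, h₂]
end

section
/- Let C be a symmetric monoidal category equipped, for every object A, with morphisms η_A : 𝟙 ⟶ A and μ_A : A ⊗ A ⟶ A such that: (i) naturality: for every morphism f : A ⟶ B one has η_A ≫ f = η_B and (f ⊗ f) ≫ μ_B = μ_A ≫ f; (ii) unit laws: (η_A ⊗ id_A) ≫ μ_A = λ_A and (id_A ⊗ η_A) ≫ μ_A = ρ_A; (iii') the weak compatibility condition: for all objects A, B, writing inl = ρ_A⁻¹ ≫ (id_A ⊗ η_B) : A ⟶ A ⊗ B and inr = λ_B⁻¹ ≫ (η_A ⊗ id_B) : B ⟶ A ⊗ B, one has (inl ⊗ inr)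 ≫ μ_{A⊗B} = id_{A⊗B}. Then the unit object 𝟙 is an initial object of C, and for all objects A, B the morphisms inl and inr exhibit A ⊗ B as a binary coproduct of A and B; in particular C is cocartesian monoidal. -/
open CategoryTheory MonoidalCategory Limits

universe v u

/-- A symmetric monoidal category with a natural unital multiplication on every object,
satisfying the weak compatibility condition `(inl ⊗ inr) ≫ μ_{A⊗B} = id`, is cocartesian
monoidal: the unit is initial and the tensor product is a binary coproduct, via the
indicated coprojections. -/
theorem unit_isInitial_and_tensor_isBinaryCoproduct_of_weak_central_monoid
    {C : Type u} [Category.{v} C] [MonoidalCategory C] [SymmetricCategory C]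
    (η : ∀ A : C, 𝟙_ C ⟶ A) (μ : ∀ A : C, A ⊗ A ⟶ A)
    (η_natural : ∀ {A B : C} (f : A ⟶ B), η A ≫ f = η B)
    (μ_natural : ∀ {A B : C} (f : A ⟶ B), (f ⊗ₘ f) ≫ μ B = μ A ≫ f)
    (unit_left : ∀ A : C, (η A ⊗ₘ 𝟙 A) ≫ μ A = (λ_ A).hom)
    (unit_right : ∀ A : C, (𝟙 A ⊗ₘ η A) ≫ μ A = (ρ_ A).hom)
    (weak_compat : ∀ A B : C,
      ((((ρ_ A).inv ≫ (𝟙 A ⊗ₘ η B)) ⊗ₘ ((λ_ B).inv ≫ (η A ⊗ₘ 𝟙 B))) ≫ μ (A ⊗ B)) = 𝟙 (A ⊗ B)) :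
    Nonempty (IsInitial (𝟙_ C)) ∧
      ∀ A B : C, Nonempty (IsColimit (BinaryCofan.mk
        ((ρ_ A).inv ≫ (𝟙 A ⊗ₘ η B)) ((λ_ B).inv ≫ (η A ⊗ₘ 𝟙 B)))) := by
  have ηunit : η (𝟙_ C) = 𝟙 (𝟙_ C) := by
    have h := η_natural ((λ_ (𝟙_ C)).inv ≫ μ (𝟙_ C))
    symm
    calc 𝟙 (𝟙_ C) = (λ_ (𝟙_ C)).inv ≫ (ρ_ (𝟙_ C)).hom := by
          rw [← unitors_equal]; simp
      _ = (λ_ (𝟙_ C)).inv ≫ (𝟙 (𝟙_ C) ⊗ₘ η (𝟙_ C)) ≫ μ (𝟙_ C) := by rw [unit_right]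
      _ = (η (𝟙_ C) ≫ (λ_ (𝟙_ C)).inv) ≫ μ (𝟙_ C) := by
          rw [← Category.assoc, id_tensorHom, ← leftUnitor_inv_naturality]
      _ = η (𝟙_ C) := by rw [Category.assoc]; exact h
  constructor
  · exact ⟨IsInitial.ofUniqueHom (fun A => η A)
      (fun A m => by
        show m = η A
        rw [← η_natural m, ηunit, Category.id_comp])⟩
  · intro A B
    refine ⟨BinaryCofan.isColimitMk
      (fun s => (s.inl ⊗ₘ s.inr) ≫ μ s.pt) ?_ ?_ ?_⟩
    · intro s
      have gen : ∀ {X : C} (f : A ⟶ X) (g : B ⟶ X),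
          ((ρ_ A).inv ≫ (𝟙 A ⊗ₘ η B)) ≫ (f ⊗ₘ g) ≫ μ X = f := by
        intro X f g
        have key : (𝟙 A ⊗ₘ η B) ≫ (f ⊗ₘ g) = (f ⊗ₘ 𝟙 (𝟙_ C)) ≫ (𝟙 X ⊗ₘ η X) := by
          rw [tensorHom_comp_tensorHom, tensorHom_comp_tensorHom]; simp [η_natural]
        rw [Category.assoc, ← Category.assoc (𝟙 A ⊗ₘ η B), key, Category.assoc, unit_right,
          tensorHom_id]
        simp [rightUnitor_naturality]
      exact gen s.inl s.inr
    · intro s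
      have gen : ∀ {X : C} (f : A ⟶ X) (g : B ⟶ X),
          ((λ_ B).inv ≫ (η A ⊗ₘ 𝟙 B)) ≫ (f ⊗ₘ g) ≫ μ X = g := by
        intro X f g
        have key : (η A ⊗ₘ 𝟙 B) ≫ (f ⊗ₘ g) = (𝟙 (𝟙_ C) ⊗ₘ g) ≫ (η X ⊗ₘ 𝟙 X) := by
          rw [tensorHom_comp_tensorHom, tensorHom_comp_tensorHom]; simp [η_natural]
        rw [Category.assoc, ← Category.assoc (η A ⊗ₘ 𝟙 B), key, Category.assoc, unit_left,
          id_tensorHom]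
        simp [leftUnitor_naturality]
      exact gen s.inl s.inr
    · intro s m h1 h2
      have key : (s.inl ⊗ₘ s.inr) ≫ μ s.pt
          = ((((ρ_ A).inv ≫ (𝟙 A ⊗ₘ η B)) ⊗ₘ ((λ_ B).inv ≫ (η A ⊗ₘ 𝟙 B))) ≫ μ (A ⊗ B)) ≫ m := by
        rw [Category.assoc, ← μ_natural m, ← Category.assoc, tensorHom_comp_tensorHom, h1, h2]; rfl
      show m = (s.inl ⊗ₘ s.inr) ≫ μ s.pt
      rw [key, weak_compat, Category.id_comp]
end

section
/- Let C be a braided monoidal category, X an object of C, η : 𝟙 ⟶ X a morphism, and μ₁, μ₂ : X ⊗ X ⟶ X two multiplications each satisfying the unit laws with respect to η (that is, (η ⊗ id_X) ≫ μ_i = λ_X and (id_X ⊗ η) ≫ μ_i = ρ_X for i = 1, 2), and satisfying the interchange law (μ₁ ⊗ μ₁) ≫ μ₂ = tensorμ(X,X,X,X) ≫ (μ₂ ⊗ μ₂) ≫ μ₁. Then μ₁ = μ₂; moreover μ₁ is commutative (β_{X,X} ≫ μ₁ = μ₁) and associative (α_{X,X,X} ≫ (id_X ⊗ μ₁) ≫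 μ₁ = (μ₁ ⊗ id_X) ≫ μ₁), so that (X, η, μ₁) is a commutative monoid object of C. -/
open CategoryTheory MonoidalCategory Limits

universe v u

section EHAux

variable {C : Type u} [Category.{v} C] [MonoidalCategory C] [BraidedCategory C] (X : C)

private lemma eh_tensorμ_unit : tensorμ X (𝟙_ C) (𝟙_ C) X = 𝟙 _ := by
  have h : (β_ (𝟙_ C) (𝟙_ C)).hom = (λ_ (𝟙_ C)).hom ≫ (ρ_ (𝟙_ C)).inv := by
    rw [← braiding_rightUnitor (𝟙_ C)]; simp
  simp only [tensorμ, h]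
  coherence

private lemma eh_tensorμ_braid : tensorμ (𝟙_ C) X X (𝟙_ C) =
    ((λ_ X).hom ⊗ₘ (ρ_ X).hom) ≫ (β_ X X).hom ≫ ((λ_ X).inv ⊗ₘ (ρ_ X).inv) := by
  simp only [tensorμ, MonoidalCategory.tensorHom_def]
  coherence

private lemma eh_tensorμ_assoc : tensorμ X X (𝟙_ C) X ≫ ((ρ_ X).hom ⊗ₘ 𝟙 (X ⊗ X)) =
    (𝟙 (X ⊗ X) ⊗ₘ (λ_ X).hom) ≫ (α_ X X X).hom := by
  simp [tensorμ]; coherence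

end EHAux

set_option maxHeartbeats 1600000 in
/-- Eckmann–Hilton for monoid objects: in a braided monoidal category, two unital
multiplications on the same object with the same unit which satisfy the interchange law
coincide, and the resulting multiplication is commutative and associative, so that we get
a commutative monoid object. -/
theorem eckmannHilton_commMonObj
    {C : Type u} [Category.{v} C] [MonoidalCategory C] [BraidedCategory C]
    (X : C) (η : 𝟙_ C ⟶ X) (μ₁ μ₂ : X ⊗ X ⟶ X)
    (unit_left₁ : (η ⊗ₘ 𝟙 X) ≫ μ₁ = (λ_ X).hom)
    (unit_right₁ : (𝟙 X ⊗ₘ η) ≫ μ₁ = (ρ_ X).hom)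
    (unit_left₂ : (η ⊗ₘ 𝟙 X) ≫ μ₂ = (λ_ X).hom)
    (unit_right₂ : (𝟙 X ⊗ₘ η) ≫ μ₂ = (ρ_ X).hom)
    (interchange : (μ₁ ⊗ₘ μ₁) ≫ μ₂ = tensorμ X X X X ≫ (μ₂ ⊗ₘ μ₂) ≫ μ₁) :
    μ₁ = μ₂ ∧
    ((β_ X X).hom ≫ μ₁ = μ₁) ∧
    ((α_ X X X).hom ≫ (𝟙 X ⊗ₘ μ₁) ≫ μ₁ = (μ₁ ⊗ₘ 𝟙 X) ≫ μ₁) := by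
  -- Step 1: μ₁ = μ₂
  have key₁ : ((𝟙 X ⊗ₘ η) ⊗ₘ (η ⊗ₘ 𝟙 X)) ≫ (μ₁ ⊗ₘ μ₁) ≫ μ₂ =
      ((𝟙 X ⊗ₘ η) ⊗ₘ (η ⊗ₘ 𝟙 X)) ≫ tensorμ X X X X ≫ (μ₂ ⊗ₘ μ₂) ≫ μ₁ := by
    rw [interchange]
  rw [tensorμ_natural_assoc, eh_tensorμ_unit, Category.id_comp,
    ← Category.assoc, tensorHom_comp_tensorHom, ← Category.assoc, tensorHom_comp_tensorHom,
    unit_right₁, unit_left₁, unit_right₂, unit_left₂] at key₁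
  have heq : μ₁ = μ₂ := by
    rw [← cancel_epi ((ρ_ X).hom ⊗ₘ (λ_ X).hom)]
    exact key₁.symm
  -- Step 2: commutativity  μ₂ = β ≫ μ₁
  have key₂ : ((η ⊗ₘ 𝟙 X) ⊗ₘ (𝟙 X ⊗ₘ η)) ≫ (μ₁ ⊗ₘ μ₁) ≫ μ₂ =
      ((η ⊗ₘ 𝟙 X) ⊗ₘ (𝟙 X ⊗ₘ η)) ≫ tensorμ X X X X ≫ (μ₂ ⊗ₘ μ₂) ≫ μ₁ := by
    rw [interchange]
  have comb : ((λ_ X).inv ⊗ₘ (ρ_ X).inv) ≫ ((η ⊗ₘ 𝟙 X) ⊗ₘ (𝟙 X ⊗ₘ η)) ≫ (μ₂ ⊗ₘ μ₂) = 𝟙 (X ⊗ X) := by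
    rw [tensorHom_comp_tensorHom_assoc, tensorHom_comp_tensorHom, Category.assoc, Category.assoc,
      unit_left₂, unit_right₂]
    simp
  have comb' := reassoc_of% comb
  rw [tensorμ_natural_assoc, eh_tensorμ_braid] at key₂
  simp only [Category.assoc, comb', Category.comp_id] at key₂
  rw [tensorHom_comp_tensorHom_assoc, unit_left₁, unit_right₁] at key₂
  -- key₂ : (λ ⊗ₘ ρ) ≫ μ₂ = (λ ⊗ₘ ρ) ≫ β ≫ μ₁
  have hcomm : (β_ X X).hom ≫ μ₁ = μ₁ := by
    have h : μ₂ = (β_ X X).hom ≫ μ₁ := by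
      rw [← cancel_epi ((λ_ X).hom ⊗ₘ (ρ_ X).hom)]
      exact key₂
    rw [← heq] at h
    exact h.symm
  -- Step 3: associativity
  have key₃ : (𝟙 (X ⊗ X) ⊗ₘ (η ⊗ₘ 𝟙 X)) ≫ (μ₁ ⊗ₘ μ₁) ≫ μ₂ =
      (𝟙 (X ⊗ X) ⊗ₘ (η ⊗ₘ 𝟙 X)) ≫ tensorμ X X X X ≫ (μ₂ ⊗ₘ μ₂) ≫ μ₁ := by
    rw [interchange]
  rw [show (𝟙 (X ⊗ X) : X ⊗ X ⟶ X ⊗ X) = 𝟙 X ⊗ₘ 𝟙 X from (id_tensorHom_id X X).symm,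
    tensorμ_natural_assoc,
    tensorHom_comp_tensorHom_assoc (𝟙 X ⊗ₘ 𝟙 X) (η ⊗ₘ 𝟙 X) μ₁ μ₁, unit_left₁,
    tensorHom_comp_tensorHom_assoc (𝟙 X ⊗ₘ η) (𝟙 X ⊗ₘ 𝟙 X) μ₂ μ₂, unit_right₂] at key₃
  simp only [id_tensorHom_id, Category.id_comp] at key₃
  -- key₃ : (μ₁ ⊗ₘ λ) ≫ μ₂ = tensorμ X X 𝟙 X ≫ ((ρ ⊗ₘ μ₂) ≫ μ₁)
  have lhs_eq : (μ₁ ⊗ₘ (λ_ X).hom) = (𝟙 (X ⊗ X) ⊗ₘ (λ_ X).hom) ≫ (μ₁ ⊗ₘ 𝟙 X) := by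
    rw [tensorHom_comp_tensorHom]; simp
  have rhs_eq : ((ρ_ X).hom ⊗ₘ μ₂) = ((ρ_ X).hom ⊗ₘ 𝟙 (X ⊗ X)) ≫ (𝟙 X ⊗ₘ μ₂) := by
    rw [tensorHom_comp_tensorHom]; simp
  have h3 := reassoc_of% (eh_tensorμ_assoc X)
  rw [lhs_eq, rhs_eq] at key₃
  simp only [Category.assoc] at key₃
  rw [h3] at key₃
  have hassoc : (μ₁ ⊗ₘ 𝟙 X) ≫ μ₂ = (α_ X X X).hom ≫ (𝟙 X ⊗ₘ μ₂) ≫ μ₁ := by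
    rw [← cancel_epi (𝟙 (X ⊗ X) ⊗ₘ (λ_ X).hom)]
    simpa [Category.assoc] using key₃
  refine ⟨heq, hcomm, ?_⟩
  rw [heq] at hassoc ⊢
  exact hassoc.symm
end

section
/- Let C be a symmetric monoidal category and suppose (η, μ) and (η', μ') are two families assigning to each object A morphisms η_A, η'_A : 𝟙 ⟶ A and μ_A, μ'_A : A ⊗ A ⟶ A, where each family is natural (for every f : A ⟶ B, η_A ≫ f = η_B and (f ⊗ f) ≫ μ_B = μ_A ≫ f, and likewise for the primed family), satisfies the unit laws ((η_A ⊗ id_A) ≫ μ_A = λ_A and (id_A ⊗ η_A) ≫ μ_A = ρ_A, and likewise for the primed family), and is compatible with the tensor product (μ_{A⊗B} = tensorμ(A,B,A,B) ≫ (μ_A ⊗ μ_B), η_{A⊗B} = λ_𝟙⁻¹ ≫ (η_A ⊗ η_B), η_𝟙 = id_𝟙 and μ_𝟙 = λ_𝟙, and likewise for the primed family). Then the two families coincide: η_A = η'_A and μ_A = μ'_A for every object A. -/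
open CategoryTheory MonoidalCategory Limits

universe v u

theorem tensorμ_units_aux {C : Type u} [Category.{v} C] [MonoidalCategory C] [SymmetricCategory C]
    (A B : C) : tensorμ A (𝟙_ C) (𝟙_ C) B = 𝟙 _ := by
  rw [tensorμ]
  rw [show (β_ (𝟙_ C) (𝟙_ C)).hom = 𝟙 _ by simp [← unitors_equal]]
  monoidal

/-- In a symmetric monoidal category, a natural family of unital multiplications satisfying
the unit laws and compatible with the tensor product is unique: any two such families
coincide. -/
theorem central_monoid_unique
    {C : Type u} [Category.{v} C] [MonoidalCategory C] [SymmetricCategory C]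
    (η : ∀ A : C, 𝟙_ C ⟶ A) (μ : ∀ A : C, A ⊗ A ⟶ A)
    (η' : ∀ A : C, 𝟙_ C ⟶ A) (μ' : ∀ A : C, A ⊗ A ⟶ A)
    (η_natural : ∀ {A B : C} (f : A ⟶ B), η A ≫ f = η B)
    (μ_natural : ∀ {A B : C} (f : A ⟶ B), (f ⊗ₘ f) ≫ μ B = μ A ≫ f)
    (unit_left : ∀ A : C, (η A ⊗ₘ 𝟙 A) ≫ μ A = (λ_ A).hom)
    (unit_right : ∀ A : C, (𝟙 A ⊗ₘ η A) ≫ μ A = (ρ_ A).hom)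
    (μ_tensor : ∀ A B : C, μ (A ⊗ B) = tensorμ A B A B ≫ (μ A ⊗ₘ μ B))
    (η_tensor : ∀ A B : C, η (A ⊗ B) = (λ_ (𝟙_ C)).inv ≫ (η A ⊗ₘ η B))
    (η_unit : η (𝟙_ C) = 𝟙 (𝟙_ C))
    (μ_unit : μ (𝟙_ C) = (λ_ (𝟙_ C)).hom)
    (η'_natural : ∀ {A B : C} (f : A ⟶ B), η' A ≫ f = η' B)
    (μ'_natural : ∀ {A B : C} (f : A ⟶ B), (f ⊗ₘ f) ≫ μ' B = μ' A ≫ f)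
    (unit'_left : ∀ A : C, (η' A ⊗ₘ 𝟙 A) ≫ μ' A = (λ_ A).hom)
    (unit'_right : ∀ A : C, (𝟙 A ⊗ₘ η' A) ≫ μ' A = (ρ_ A).hom)
    (μ'_tensor : ∀ A B : C, μ' (A ⊗ B) = tensorμ A B A B ≫ (μ' A ⊗ₘ μ' B))
    (η'_tensor : ∀ A B : C, η' (A ⊗ B) = (λ_ (𝟙_ C)).inv ≫ (η' A ⊗ₘ η' B))
    (η'_unit : η' (𝟙_ C) = 𝟙 (𝟙_ C))
    (μ'_unit : μ' (𝟙_ C) = (λ_ (𝟙_ C)).hom) :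
    ∀ A : C, η A = η' A ∧ μ A = μ' A := by
  intro A
  have hη : η A = η' A := by
    rw [← η'_natural (η A), η'_unit, Category.id_comp]
  refine ⟨hη, ?_⟩
  have key : (μ A ⊗ₘ μ A) ≫ μ' A = tensorμ A A A A ≫ (μ' A ⊗ₘ μ' A) ≫ μ A := by
    rw [μ'_natural (μ A), μ'_tensor, Category.assoc]
  have key2 : ((𝟙 A ⊗ₘ η A) ⊗ₘ (η A ⊗ₘ 𝟙 A)) ≫ (μ A ⊗ₘ μ A) ≫ μ' A
      = ((𝟙 A ⊗ₘ η A) ⊗ₘ (η A ⊗ₘ 𝟙 A)) ≫ tensorμ A A A A ≫ (μ' A ⊗ₘ μ' A) ≫ μ A := by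
    rw [key]
  rw [← Category.assoc, tensorHom_comp_tensorHom, unit_right, unit_left,
      tensorμ_natural_assoc (𝟙 A) (η A) (η A) (𝟙 A), tensorμ_units_aux,
      Category.id_comp, ← Category.assoc, tensorHom_comp_tensorHom, hη, unit'_right, unit'_left]
      at key2
  have : ((ρ_ A).hom ⊗ₘ (λ_ A).hom) ≫ μ' A = ((ρ_ A).hom ⊗ₘ (λ_ A).hom) ≫ μ A := key2
  exact ((cancel_epi ((ρ_ A).hom ⊗ₘ (λ_ A).hom)).mp this).symm
end
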